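/- If a graph G on n vertices contains two adjacent vertices x and y, then all edges incident with x or y can be covered by at most n−1 cliques of G. -/

import Mathlib

open SimpleGraph Finset

/-- If `x` and `y` are adjacent vertices of a graph `G` on `n` vertices, then all edges
incident with `x` or `y` can be covered by at most `n - 1` cliques of `G`. -/
theorem stmt_1 {V : Type*} [Fintype V] [DecidableEq V] (G : SimpleGraph V) (x y : V)
    (hxy : G.Adj x y) :
    ∃ C : Finset (Finset V),
      (∀ X ∈ C, G.IsClique (X : Set V)) ∧
      C.card ≤ Fintype.card V - 1 ∧
      ∀ u v : V, G.Adj u v → (u = x ∨ u = y ∨ v = x ∨ v = y) →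
        ∃ X ∈ C, u ∈ X ∧ v ∈ X := by
  classical
  set f : V → Finset V := fun z =>
    if G.Adj x z ∧ G.Adj y z then {x, y, z}
    else if G.Adj x z then {x, z}
    else if G.Adj y z then {y, z}
    else {x, y} with hf
  refine ⟨(univ.erase x).image f, ?_, ?_, ?_⟩
  · intro X hX
    simp only [mem_image] at hX
    obtain ⟨z, _, rfl⟩ := hX
    by_cases h1 : G.Adj x z ∧ G.Adj y z
    · simp only [hf, if_pos h1]
      intro a ha b hb hab
      simp only [coe_insert, Set.mem_insert_iff, coe_singleton, Set.mem_singleton_iff] at ha hb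
      rcases ha with rfl | rfl | rfl <;> rcases hb with rfl | rfl | rfl <;>
        first | exact absurd rfl hab | exact hxy | exact hxy.symm | exact h1.1 | exact h1.1.symm |
          exact h1.2 | exact h1.2.symm
    · by_cases h2 : G.Adj x z
      · have h3 : ¬ G.Adj y z := fun h => h1 ⟨h2, h⟩
        simp only [hf, h1, h2, h3, if_neg, if_pos, not_false_iff, false_and, and_false, if_false,
          if_true]
        rw [coe_insert, coe_singleton]; exact isClique_pair.2 fun _ => h2
      · by_cases h3 : G.Adj y z
        · simp only [hf, h1, h2, h3, if_neg, if_pos, not_false_iff, false_and, and_false,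
            if_false, if_true]
          rw [coe_insert, coe_singleton]; exact isClique_pair.2 fun _ => h3
        · simp only [hf, h1, h2, h3, if_neg, not_false_iff, false_and, and_false, if_false]
          rw [coe_insert, coe_singleton]; exact isClique_pair.2 fun _ => hxy
  · calc ((univ.erase x).image f).card ≤ (univ.erase x).card := card_image_le
      _ = Fintype.card V - 1 := by rw [card_erase_of_mem (mem_univ x), card_univ]
  · have keyX : ∀ v : V, G.Adj x v →
        ∃ X ∈ (univ.erase x).image f, x ∈ X ∧ v ∈ X := by
      intro v huv
      refine ⟨f v, mem_image_of_mem f (mem_erase.2 ⟨huv.ne', mem_univ v⟩), ?_⟩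
      simp only [hf]
      by_cases h3 : G.Adj y v <;> simp [huv, h3]
    have keyY : ∀ v : V, G.Adj y v →
        ∃ X ∈ (univ.erase x).image f, y ∈ X ∧ v ∈ X := by
      intro v huv
      by_cases hv : v = x
      · subst hv
        refine ⟨f y, mem_image_of_mem f (mem_erase.2 ⟨hxy.ne', mem_univ y⟩), ?_⟩
        simp only [hf]
        have hyy : ¬ G.Adj y y := G.loopless.irrefl y
        simp [hxy, hyy]
      · refine ⟨f v, mem_image_of_mem f (mem_erase.2 ⟨hv, mem_univ v⟩), ?_⟩
        simp only [hf]
        by_cases h2 : G.Adj x v <;> simp [huv, h2]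
    have key : ∀ u v : V, G.Adj u v → (u = x ∨ u = y) →
        ∃ X ∈ (univ.erase x).image f, u ∈ X ∧ v ∈ X := by
      intro u v huv hu
      rcases hu with hu | hu
      · exact hu ▸ keyX v (hu ▸ huv)
      · exact hu ▸ keyY v (hu ▸ huv)
    intro u v huv hor
    rcases hor with h | h | h | h
    · exact key u v huv (Or.inl h)
    · exact key u v huv (Or.inr h)
    · obtain ⟨X, hX, h1, h2⟩ := key v u huv.symm (Or.inl h)
      exact ⟨X, hX, h2, h1⟩
    · obtain ⟨X, hX, h1, h2⟩ := key v u huv.symm (Or.inr h)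
      exact ⟨X, hX, h2, h1⟩
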